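/- If two segmentations Σ and Σ' of Ω have the same χ-flavored multisegment, then f_Σ and f_{Σ'} lie in the same G_χ-orbit on V. -/

import Mathlib

open Matrix

noncomputable section

/-- The indexing set `Ω = {(i,j) : 1 ≤ i ≤ m, 1 ≤ j ≤ v_i}` for the standard basis vectors of
`⊕ ℂ^{v_i}`; levels are indexed by `Fin (m'+1)` (so `m = m'+1`) and `d` is the dimension
vector (with `d (Fin.last m') = n`). -/
abbrev QOmega (m' : ℕ) (d : Fin (m' + 1) → ℕ) := Σ i : Fin (m' + 1), Fin (d i)

/-- A point of `V = ⊕_{i=1}^{m-1} Hom(ℂ^{v_i}, ℂ^{v_{i+1}})`, as a family of matrices. -/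
abbrev QRep (m' : ℕ) (d : Fin (m' + 1) → ℕ) :=
  ∀ i : Fin m', Matrix (Fin (d i.succ)) (Fin (d i.castSucc)) ℂ

/-- An element of `GL_{v_1} × ⋯ × GL_{v_{m-1}} × GL_n`. -/
abbrev QGroup (m' : ℕ) (d : Fin (m' + 1) → ℕ) := ∀ i : Fin (m' + 1), GL (Fin (d i)) ℂ

/-- The base-change action of the group on the space of quiver representations. -/
def qAct {m' : ℕ} {d : Fin (m' + 1) → ℕ} (g : QGroup m' d) (f : QRep m' d) : QRep m' d :=
  fun i => ((g i.succ : Matrix (Fin (d i.succ)) (Fin (d i.succ)) ℂ)) * f i *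
    (((g i.castSucc)⁻¹ : GL (Fin (d i.castSucc)) ℂ) : Matrix _ _ ℂ)

/-- Membership in the parabolic `P_χ ⊆ GL_n`: the entries `g_{kl}` with `χ_k > χ_l` vanish. -/
def InParabolic {N : ℕ} (χ : Fin N → ℤ) (A : Matrix (Fin N) (Fin N) ℂ) : Prop :=
  ∀ k l : Fin N, χ l < χ k → A k l = 0

/-- The set of levels occurring in a subset `S ⊆ Ω`. -/
def levelsOf {m' : ℕ} {d : Fin (m' + 1) → ℕ} (S : Set (QOmega m' d)) : Set (Fin (m' + 1)) :=
  {i | ∃ j : Fin (d i), (⟨i, j⟩ : QOmega m' d) ∈ S}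

/-- A subsegment of `Ω`: a set of the form `{(k,j_k),(k+1,j_{k+1}),…,(ℓ,j_ℓ)}`, i.e. a
nonempty subset with at most one element at each level whose set of levels is an interval. -/
def IsSubsegment {m' : ℕ} {d : Fin (m' + 1) → ℕ} (S : Set (QOmega m' d)) : Prop :=
  S.Nonempty ∧
  (∀ (i : Fin (m' + 1)) (j j' : Fin (d i)),
    (⟨i, j⟩ : QOmega m' d) ∈ S → (⟨i, j'⟩ : QOmega m' d) ∈ S → j = j') ∧
  (∀ i₁ i₂ i₃ : Fin (m' + 1), i₁ ∈ levelsOf S → i₂ ∈ levelsOf S →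
    i₁ ≤ i₃ → i₃ ≤ i₂ → i₃ ∈ levelsOf S)

/-- A segmentation of `Ω`: a partition of `Ω` into subsegments. -/
def IsSegmentation {m' : ℕ} {d : Fin (m' + 1) → ℕ} (P : Set (Set (QOmega m' d))) : Prop :=
  (∀ S ∈ P, IsSubsegment S) ∧ ∀ x : QOmega m' d, ∃! S, S ∈ P ∧ x ∈ S

open Classical in
/-- The quiver representation `f_Σ` attached to a segmentation: `f(b_{i,j}) = b_{i+1,j'}` if
`(i,j)` and `(i+1,j')` lie in a common subsegment, and `f(b_{i,j}) = 0` otherwise. -/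
def segRep {m' : ℕ} {d : Fin (m' + 1) → ℕ} (P : Set (Set (QOmega m' d))) : QRep m' d :=
  fun i => Matrix.of fun j' j =>
    if ∃ S ∈ P, (⟨i.castSucc, j⟩ : QOmega m' d) ∈ S ∧ (⟨i.succ, j'⟩ : QOmega m' d) ∈ S
    then (1 : ℂ) else 0

/-- Two segmentations define the same `χ`-flavored multisegment: there is a bijection between
their subsegments matching the underlying segments, and matching subsegments ending at the top
level only when the corresponding flavors (entries of `χ`) agree. -/
def SameMultisegment {m' : ℕ} {d : Fin (m' + 1) → ℕ} (χ : Fin (d (Fin.last m')) → ℤ)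
    (P P' : Set (Set (QOmega m' d))) : Prop :=
  ∃ φ : P ≃ P', ∀ S : P,
    levelsOf (S : Set (QOmega m' d)) = levelsOf ((φ S : Set (QOmega m' d))) ∧
    ∀ j j' : Fin (d (Fin.last m')),
      (⟨Fin.last m', j⟩ : QOmega m' d) ∈ (S : Set (QOmega m' d)) →
      (⟨Fin.last m', j'⟩ : QOmega m' d) ∈ ((φ S : Set (QOmega m' d))) → χ j = χ j'

/-- `f` and `f'` lie in the same `G_χ = P_χ × G_0` orbit. -/
def SameOrbit {m' : ℕ} {d : Fin (m' + 1) → ℕ} (χ : Fin (d (Fin.last m')) → ℤ)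
    (f f' : QRep m' d) : Prop :=
  ∃ g : QGroup m' d,
    InParabolic χ ((g (Fin.last m') : Matrix (Fin (d (Fin.last m'))) (Fin (d (Fin.last m'))) ℂ)) ∧
    qAct g f = f'

/-- If two segmentations of `Ω` have the same `χ`-flavored multisegment, then the associated
points `f_Σ`, `f_{Σ'}` lie in the same `G_χ`-orbit on `V`. -/
theorem sameMultisegment_implies_sameOrbit (m' : ℕ) (hm : 1 ≤ m') (d : Fin (m' + 1) → ℕ)
    (χ : Fin (d (Fin.last m')) → ℤ) (hχ : Monotone χ)
    (P P' : Set (Set (QOmega m' d)))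
    (hP : IsSegmentation P) (hP' : IsSegmentation P')
    (hsame : SameMultisegment χ P P') :
    SameOrbit χ (segRep P) (segRep P') := by
  classical
  obtain ⟨φ, hφ⟩ := hsame
  have hex : ∀ x : QOmega m' d, ∃ S, S ∈ P ∧ x ∈ S := fun x => (hP.2 x).exists
  choose seg hmem hsegx using hex
  have huniq : ∀ (x : QOmega m' d) (S : Set (QOmega m' d)), S ∈ P → x ∈ S → S = seg x :=
    fun x S h1 h2 => (hP.2 x).unique ⟨h1, h2⟩ ⟨hmem x, hsegx x⟩
  have hex' : ∀ x : QOmega m' d, ∃ S, S ∈ P' ∧ x ∈ S := fun x => (hP'.2 x).exists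
  choose seg' hmem' hsegx' using hex'
  have huniq' : ∀ (x : QOmega m' d) (S : Set (QOmega m' d)), S ∈ P' → x ∈ S → S = seg' x :=
    fun x S h1 h2 => (hP'.2 x).unique ⟨h1, h2⟩ ⟨hmem' x, hsegx' x⟩
  have hlev : ∀ S' : ↥P', levelsOf ((φ.symm S' : Set (QOmega m' d)))
      = levelsOf (S' : Set (QOmega m' d)) := by
    intro S'
    have h := (hφ (φ.symm S')).1
    rwa [Equiv.apply_symm_apply] at h
  -- construct τ : for each (i,j), the level-i element of φ.symm (segment of (i,j) in P')
  have hexτ : ∀ (i : Fin (m' + 1)) (j : Fin (d i)),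
      ∃ j' : Fin (d i), (⟨i, j'⟩ : QOmega m' d) ∈
        ((φ.symm ⟨seg' ⟨i, j⟩, hmem' ⟨i, j⟩⟩ : ↥P) : Set (QOmega m' d)) := by
    intro i j
    have hi : i ∈ levelsOf (((⟨seg' ⟨i, j⟩, hmem' ⟨i, j⟩⟩ : ↥P') : Set (QOmega m' d))) :=
      ⟨j, hsegx' ⟨i, j⟩⟩
    rw [← hlev] at hi
    exact hi
  choose τ hτ using hexτ
  -- construct σ : the inverse direction
  have hexσ : ∀ (i : Fin (m' + 1)) (j : Fin (d i)),
      ∃ j' : Fin (d i), (⟨i, j'⟩ : QOmega m' d) ∈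
        ((φ ⟨seg ⟨i, j⟩, hmem ⟨i, j⟩⟩ : ↥P') : Set (QOmega m' d)) := by
    intro i j
    have hi : i ∈ levelsOf (((⟨seg ⟨i, j⟩, hmem ⟨i, j⟩⟩ : ↥P) : Set (QOmega m' d))) :=
      ⟨j, hsegx ⟨i, j⟩⟩
    rw [(hφ _).1] at hi
    exact hi
  choose σ hσ using hexσ
  have hsegτ : ∀ (i : Fin (m' + 1)) (j : Fin (d i)),
      ((φ.symm ⟨seg' ⟨i, j⟩, hmem' ⟨i, j⟩⟩ : ↥P) : Set (QOmega m' d)) = seg ⟨i, τ i j⟩ :=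
    fun i j => huniq _ _ (φ.symm ⟨seg' ⟨i, j⟩, hmem' ⟨i, j⟩⟩).2 (hτ i j)
  have hseg'σ : ∀ (i : Fin (m' + 1)) (j : Fin (d i)),
      ((φ ⟨seg ⟨i, j⟩, hmem ⟨i, j⟩⟩ : ↥P') : Set (QOmega m' d)) = seg' ⟨i, σ i j⟩ :=
    fun i j => huniq' _ _ (φ ⟨seg ⟨i, j⟩, hmem ⟨i, j⟩⟩).2 (hσ i j)
  have hστ : ∀ (i : Fin (m' + 1)) (j : Fin (d i)), σ i (τ i j) = j := by
    intro i j
    have h1 : (⟨seg ⟨i, τ i j⟩, hmem ⟨i, τ i j⟩⟩ : ↥P)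
        = φ.symm ⟨seg' ⟨i, j⟩, hmem' ⟨i, j⟩⟩ := Subtype.ext (hsegτ i j).symm
    have h2 := hσ i (τ i j)
    rw [h1, Equiv.apply_symm_apply] at h2
    exact (hP'.1 _ (hmem' ⟨i, j⟩)).2.1 i _ _ h2 (hsegx' ⟨i, j⟩)
  have hτσ : ∀ (i : Fin (m' + 1)) (j : Fin (d i)), τ i (σ i j) = j := by
    intro i j
    have h1 : (⟨seg' ⟨i, σ i j⟩, hmem' ⟨i, σ i j⟩⟩ : ↥P')
        = φ ⟨seg ⟨i, j⟩, hmem ⟨i, j⟩⟩ := Subtype.ext (hseg'σ i j).symm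
    have h2 := hτ i (σ i j)
    rw [h1, Equiv.symm_apply_apply] at h2
    exact (hP.1 _ (hmem ⟨i, j⟩)).2.1 i _ _ h2 (hsegx ⟨i, j⟩)
  let e : ∀ i : Fin (m' + 1), Fin (d i) ≃ Fin (d i) := fun i =>
    ⟨τ i, σ i, hστ i, hτσ i⟩
  have hmul1 : ∀ i : Fin (m' + 1),
      ((e i).toPEquiv.toMatrix : Matrix (Fin (d i)) (Fin (d i)) ℂ)
        * (e i).symm.toPEquiv.toMatrix = 1 := by
    intro i
    rw [← PEquiv.toMatrix_trans, ← Equiv.toPEquiv_trans, Equiv.self_trans_symm,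
      Equiv.toPEquiv_refl, PEquiv.toMatrix_refl]
  have hmul2 : ∀ i : Fin (m' + 1),
      ((e i).symm.toPEquiv.toMatrix : Matrix (Fin (d i)) (Fin (d i)) ℂ)
        * (e i).toPEquiv.toMatrix = 1 := by
    intro i
    rw [← PEquiv.toMatrix_trans, ← Equiv.toPEquiv_trans, Equiv.symm_trans_self,
      Equiv.toPEquiv_refl, PEquiv.toMatrix_refl]
  refine ⟨fun i => ⟨(e i).toPEquiv.toMatrix, (e i).symm.toPEquiv.toMatrix, hmul1 i, hmul2 i⟩,
    ?_, ?_⟩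
  · -- the permutation at the top level preserves flavors, hence lies in the parabolic
    have hflav : ∀ j : Fin (d (Fin.last m')), χ (τ (Fin.last m') j) = χ j := by
      intro j
      have h1 := hτ (Fin.last m') j
      have h2 : (⟨Fin.last m', j⟩ : QOmega m' d) ∈
          ((φ (φ.symm ⟨seg' ⟨Fin.last m', j⟩, hmem' ⟨Fin.last m', j⟩⟩) : ↥P')
            : Set (QOmega m' d)) := by
        rw [Equiv.apply_symm_apply]; exact hsegx' _
      exact (hφ (φ.symm ⟨seg' ⟨Fin.last m', j⟩, hmem' ⟨Fin.last m', j⟩⟩)).2 _ _ h1 h2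
    intro k l hlt
    show ((e (Fin.last m')).toPEquiv.toMatrix : Matrix _ _ ℂ) k l = 0
    rw [PEquiv.toMatrix_apply, Equiv.toPEquiv_apply, if_neg]
    intro hl
    have hle : τ (Fin.last m') k = l := by
      have h : (e (Fin.last m')) k = l := by simpa using hl
      exact h
    rw [← hle, hflav] at hlt
    exact lt_irrefl _ hlt
  · -- the base change equality
    funext i
    show (((e i.succ).toPEquiv.toMatrix : Matrix _ _ ℂ) * segRep P i
        : Matrix (Fin (d i.succ)) (Fin (d i.castSucc)) ℂ)
        * ((e i.castSucc).symm.toPEquiv.toMatrix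
          : Matrix (Fin (d i.castSucc)) (Fin (d i.castSucc)) ℂ) = segRep P' i
    rw [PEquiv.toMatrix_toPEquiv_mul, PEquiv.mul_toMatrix_toPEquiv, Equiv.symm_symm]
    ext j' j
    simp only [Matrix.submatrix_apply, e, Equiv.coe_fn_mk, segRep, Matrix.of_apply]
    refine if_congr ?_ rfl rfl
    constructor
    · rintro ⟨S, hS, h1, h2⟩
      have e1 : S = seg ⟨i.castSucc, τ i.castSucc j⟩ := huniq _ _ hS h1
      have e2 : S = seg ⟨i.succ, τ i.succ j'⟩ := huniq _ _ hS h2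
      have e3 : ((φ.symm ⟨seg' ⟨i.castSucc, j⟩, hmem' _⟩ : ↥P) : Set (QOmega m' d))
          = ((φ.symm ⟨seg' ⟨i.succ, j'⟩, hmem' _⟩ : ↥P) : Set (QOmega m' d)) := by
        rw [hsegτ, hsegτ, ← e1, ← e2]
      have e4 : seg' ⟨i.castSucc, j⟩ = seg' ⟨i.succ, j'⟩ :=
        Subtype.ext_iff.mp (φ.symm.injective (Subtype.ext e3))
      refine ⟨seg' ⟨i.castSucc, j⟩, hmem' _, hsegx' _, ?_⟩
      rw [e4]; exact hsegx' _
    · rintro ⟨S', hS', h1, h2⟩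
      have e1 : S' = seg' ⟨i.castSucc, j⟩ := huniq' _ _ hS' h1
      have e2 : S' = seg' ⟨i.succ, j'⟩ := huniq' _ _ hS' h2
      refine ⟨((φ.symm ⟨S', hS'⟩ : ↥P) : Set (QOmega m' d)), (φ.symm ⟨S', hS'⟩).2, ?_, ?_⟩
      · have h := hτ i.castSucc j
        have : (⟨seg' ⟨i.castSucc, j⟩, hmem' _⟩ : ↥P') = ⟨S', hS'⟩ := Subtype.ext e1.symm
        rwa [this] at h
      · have h := hτ i.succ j'
        have : (⟨seg' ⟨i.succ, j'⟩, hmem' _⟩ : ↥P') = ⟨S', hS'⟩ := Subtype.ext e2.symm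
        rwa [this] at h

end
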